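/- Let p be a prime, let q₁, q₂ be nonzero elements of ℤ/pℤ with q₁ ≠ q₂, and let h ∈ ℤ/pℤ. Then the map S : (ℤ/pℤ)² → (ℤ/pℤ)² given by S(x,y) = (q₁⁻¹·y + (1 − q₂·q₁⁻¹)·x + h, q₂·x − q₁·h) makes (ℤ/pℤ, S) an indecomposable nondegenerate braided set. -/

import Mathlib

/-- `S₁ = S × id` acting on the first two factors of `X × X × X`. -/
def braidL {X : Type*} (S : X × X → X × X) : X × X × X → X × X × X :=
  fun t => ((S (t.1, t.2.1)).1, (S (t.1, t.2.1)).2, t.2.2)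

/-- `S₂ = id × S` acting on the last two factors of `X × X × X`. -/
def braidR {X : Type*} (S : X × X → X × X) : X × X × X → X × X × X :=
  fun t => (t.1, S (t.2.1, t.2.2))

/-- A braided set: `S` is a bijection satisfying `S₁S₂S₁ = S₂S₁S₂`. -/
def IsBraidedSet {X : Type*} (S : X × X → X × X) : Prop :=
  Function.Bijective S ∧
    braidL S ∘ braidR S ∘ braidL S = braidR S ∘ braidL S ∘ braidR S

/-- Nondegeneracy: writing `S (x, y) = (g_x y, f_y x)`, each `g_x` and each `f_y`
is a bijection. -/
def Nondegenerate {X : Type*} (S : X × X → X × X) : Prop :=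
  (∀ x, Function.Bijective fun y => (S (x, y)).1) ∧
    (∀ y, Function.Bijective fun x => (S (x, y)).2)

/-- Decomposability of a solution. -/
def Decomposable {X : Type*} (S : X × X → X × X) : Prop :=
  ∃ X₁ X₂ : Set X, X₁.Nonempty ∧ X₂.Nonempty ∧ Disjoint X₁ X₂ ∧ X₁ ∪ X₂ = Set.univ ∧
    (∀ x ∈ X₁, ∀ y ∈ X₁, (S (x, y)).1 ∈ X₁ ∧ (S (x, y)).2 ∈ X₁) ∧
    (∀ x ∈ X₂, ∀ y ∈ X₂, (S (x, y)).1 ∈ X₂ ∧ (S (x, y)).2 ∈ X₂)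

/-- Indecomposability of a solution. -/
def Indecomposable {X : Type*} (S : X × X → X × X) : Prop := ¬ Decomposable S

/-- Theorem 2.9(1)(i): the affine map
`S(x,y) = (q₁⁻¹ y + (1 - q₂ q₁⁻¹) x + h, q₂ x - q₁ h)` is an indecomposable
nondegenerate braided set on `ℤ/pℤ`. -/
lemma zmod2_aux : ∀ a b : ZMod 2, a ≠ 0 → b ≠ 0 → a = b := by decide

theorem affine_solution_type_i
    {p : ℕ} (hp : p.Prime) (q₁ q₂ h : ZMod p) (hq₁ : q₁ ≠ 0) (hq₂ : q₂ ≠ 0)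
    (hne : q₁ ≠ q₂) :
    IsBraidedSet (fun xy : ZMod p × ZMod p =>
        (q₁⁻¹ * xy.2 + (1 - q₂ * q₁⁻¹) * xy.1 + h, q₂ * xy.1 - q₁ * h)) ∧
    Nondegenerate (fun xy : ZMod p × ZMod p =>
        (q₁⁻¹ * xy.2 + (1 - q₂ * q₁⁻¹) * xy.1 + h, q₂ * xy.1 - q₁ * h)) ∧
    Indecomposable (fun xy : ZMod p × ZMod p =>
        (q₁⁻¹ * xy.2 + (1 - q₂ * q₁⁻¹) * xy.1 + h, q₂ * xy.1 - q₁ * h)) := by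

  haveI : Fact p.Prime := ⟨hp⟩
  set S : ZMod p × ZMod p → ZMod p × ZMod p := (fun xy : ZMod p × ZMod p =>
        (q₁⁻¹ * xy.2 + (1 - q₂ * q₁⁻¹) * xy.1 + h, q₂ * xy.1 - q₁ * h)) with hS
  have ha : (1 - q₂ * q₁⁻¹) ≠ 0 := by
    intro hc
    apply hne
    have h1 : q₂ * q₁⁻¹ = 1 := by linear_combination -hc
    field_simp at h1
    exact h1.symm
  have hbij : Function.Bijective S := by
    apply Function.bijective_iff_has_inverse.mpr
    refine ⟨fun uv => (q₂⁻¹ * (uv.2 + q₁ * h),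
      q₁ * (uv.1 - (1 - q₂ * q₁⁻¹) * (q₂⁻¹ * (uv.2 + q₁ * h)) - h)), ?_, ?_⟩
    · rintro ⟨x, y⟩
      simp only [hS, Prod.mk.injEq]
      constructor <;> field_simp <;> ring
    · rintro ⟨u, v⟩
      simp only [hS, Prod.mk.injEq]
      constructor <;> field_simp <;> ring
  refine ⟨⟨hbij, ?_⟩, ⟨?_, ?_⟩, ?_⟩
  · funext t
    obtain ⟨x, y, z⟩ := t
    simp only [braidL, braidR, Function.comp_apply, hS, Prod.mk.injEq]
    refine ⟨?_, ?_, trivial⟩ <;> field_simp <;> ring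
  · intro x
    apply Function.bijective_iff_has_inverse.mpr
    refine ⟨fun u => q₁ * (u - (1 - q₂ * q₁⁻¹) * x - h), ?_, ?_⟩ <;> intro y <;>
      simp only [hS] <;> field_simp <;> ring
  · intro y
    apply Function.bijective_iff_has_inverse.mpr
    refine ⟨fun u => q₂⁻¹ * (u + q₁ * h), ?_, ?_⟩ <;> intro x <;>
      simp only [hS] <;> field_simp <;> ring
  · rintro ⟨X₁, X₂, hn₁, hn₂, hdisj, hunion, hc₁, hc₂⟩
    -- p ≠ 2
    have hp2 : p ≠ 2 := by
      rintro rfl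
      exact hne (zmod2_aux q₁ q₂ hq₁ hq₂)
    have h2 : (2 : ZMod p) ≠ 0 := by
      intro hc
      have : (p : ℕ) ∣ 2 := by
        have := (ZMod.natCast_eq_zero_iff 2 p).mp (by exact_mod_cast hc)
        exact this
      exact hp2 ((Nat.prime_dvd_prime_iff_eq hp Nat.prime_two).mp this)
    -- key step: a set closed under first component containing two distinct elements is univ
    have key : ∀ Y : Set (ZMod p),
        (∀ x ∈ Y, ∀ y ∈ Y, (S (x, y)).1 ∈ Y) →
        ∀ x₀ ∈ Y, ∀ x₁ ∈ Y, x₀ ≠ x₁ → Y = Set.univ := by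
      intro Y hcl x₀ hx₀ x₁ hx₁ hx01
      set c : ZMod p := (1 - q₂ * q₁⁻¹) * (x₁ - x₀) with hc
      have hcne : c ≠ 0 := mul_ne_zero ha (sub_ne_zero.mpr (Ne.symm hx01))
      -- translation by c preserves Y
      have htrans : ∀ u ∈ Y, u + c ∈ Y := by
        intro u hu
        have hmaps : Set.MapsTo (fun y => (S (x₀, y)).1) Y Y := fun y hy => hcl x₀ hx₀ y hy
        have hinj : Set.InjOn (fun y => (S (x₀, y)).1) Y := by
          intro a _ b _ hab
          simp only [hS] at hab
          have : q₁⁻¹ * a = q₁⁻¹ * b := by linear_combination hab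
          exact mul_left_cancel₀ (inv_ne_zero hq₁) this
        have hbijon := (Set.toFinite Y).injOn_iff_bijOn_of_mapsTo hmaps |>.mp hinj
        obtain ⟨y, hy, hyu⟩ := hbijon.surjOn hu
        have := hcl x₁ hx₁ y hy
        simp only [hS] at hyu this ⊢
        have heq : q₁⁻¹ * y + (1 - q₂ * q₁⁻¹) * x₁ + h = u + c := by
          rw [← hyu]; simp only [hc]; ring
        rwa [heq] at this
      have hiter : ∀ n : ℕ, ∀ u ∈ Y, u + n • c ∈ Y := by
        intro n
        induction n with
        | zero => intro u hu; simpa using hu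
        | succ k ih =>
          intro u hu
          have := htrans _ (ih u hu)
          have heq : u + (k + 1) • c = u + k • c + c := by
            rw [add_nsmul, one_nsmul]; ring
          rwa [heq]
      apply Set.eq_univ_of_forall
      intro z
      have : z = x₀ + (((z - x₀) * c⁻¹).val : ℕ) • c := by
        rw [nsmul_eq_mul]
        rw [ZMod.natCast_val, ZMod.cast_id]
        field_simp
        ring
      rw [this]
      exact hiter _ _ hx₀
    -- find two distinct elements in the same part
    have hmem : ∀ z : ZMod p, z ∈ X₁ ∨ z ∈ X₂ := by
      intro z
      have : z ∈ X₁ ∪ X₂ := hunion ▸ Set.mem_univ z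
      exact this
    have h01 : (0 : ZMod p) ≠ 1 := by
      intro hc; exact one_ne_zero (α := ZMod p) hc.symm
    have h02 : (0 : ZMod p) ≠ 2 := fun hc => h2 hc.symm
    have h12 : (1 : ZMod p) ≠ 2 := by
      intro hc
      have : (1 : ZMod p) = 0 := by linear_combination -hc
      exact one_ne_zero this
    have contra : ∀ Y Z : Set (ZMod p), Disjoint Y Z → Z.Nonempty →
        (∀ x ∈ Y, ∀ y ∈ Y, (S (x, y)).1 ∈ Y) →
        ∀ x₀ ∈ Y, ∀ x₁ ∈ Y, x₀ ≠ x₁ → False := by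
      intro Y Z hd hzn hcl x₀ hx₀ x₁ hx₁ hne'
      obtain ⟨z, hz⟩ := hzn
      have := key Y hcl x₀ hx₀ x₁ hx₁ hne'
      exact Set.disjoint_left.mp hd (this ▸ Set.mem_univ z) hz
    have hcl₁ : ∀ x ∈ X₁, ∀ y ∈ X₁, (S (x, y)).1 ∈ X₁ := fun x hx y hy => (hc₁ x hx y hy).1
    have hcl₂ : ∀ x ∈ X₂, ∀ y ∈ X₂, (S (x, y)).1 ∈ X₂ := fun x hx y hy => (hc₂ x hx y hy).1
    rcases hmem 0 with m0 | m0 <;> rcases hmem 1 with m1 | m1 <;> rcases hmem 2 with m2 | m2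
    · exact contra X₁ X₂ hdisj hn₂ hcl₁ 0 m0 1 m1 h01
    · exact contra X₁ X₂ hdisj hn₂ hcl₁ 0 m0 1 m1 h01
    · exact contra X₁ X₂ hdisj hn₂ hcl₁ 0 m0 2 m2 h02
    · exact contra X₂ X₁ hdisj.symm hn₁ hcl₂ 1 m1 2 m2 h12
    · exact contra X₁ X₂ hdisj hn₂ hcl₁ 1 m1 2 m2 h12
    · exact contra X₂ X₁ hdisj.symm hn₁ hcl₂ 0 m0 2 m2 h02
    · exact contra X₂ X₁ hdisj.symm hn₁ hcl₂ 0 m0 1 m1 h01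
    · exact contra X₂ X₁ hdisj.symm hn₁ hcl₂ 0 m0 1 m1 h01
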